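/- In the setting of Construction 1 (with k ≤ n), every k×k submatrix of G_0 is invertible, and every k×k submatrix of G_1 is invertible. -/
import Mathlib

open Polynomial Matrix

/-- `N_0(a) = 1`, `N_{i+1}(a) = N_i(a)^q · a`. -/
def skewN (q : ℕ) {F : Type*} [Field F] : ℕ → F → F
  | 0, _ => 1
  | i + 1, a => (skewN q i a) ^ q * a

/-- `α = Σ_{j=0}^{k-1} λ^j b_j` (coordinates `(1, λ, …, λ^{k-1}, 0, …, 0)` in the basis `b`). -/
def alph (k : ℕ) {F : Type*} [Field F] (lam : F) (b : Fin (2 * k) → F) : F :=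
  ∑ j : Fin k, lam ^ (j : ℕ) * b (Fin.castLE (by omega) j)

/-- `β = Σ_{j=0}^{2k-1} λ^j b_j` (coordinates `(1, λ, …, λ^{2k-1})` in the basis `b`). -/
def bet (k : ℕ) {F : Type*} [Field F] (lam : F) (b : Fin (2 * k) → F) : F :=
  ∑ j : Fin (2 * k), lam ^ (j : ℕ) * b j

/-- `(G_0)_{r,i} = N_r(α_i^{q-1}) α_i = N_r(^{α_i} 1) α_i`. -/
def G0mat (q k n : ℕ) {F : Type*} [Field F] (lam : Fin n → F) (b : Fin (2 * k) → F) :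
    Matrix (Fin k) (Fin n) F :=
  Matrix.of fun r i => skewN q (r : ℕ) ((alph k (lam i) b) ^ (q - 1)) * alph k (lam i) b

/-- `(G_1)_{r,i} = N_r(β_i^{q-1} γ) β_i = N_r(^{β_i} γ) β_i`. -/
def G1mat (q k n : ℕ) {F : Type*} [Field F] (γ : F) (lam : Fin n → F)
    (b : Fin (2 * k) → F) : Matrix (Fin k) (Fin n) F :=
  Matrix.of fun r i => skewN q (r : ℕ) ((bet k (lam i) b) ^ (q - 1) * γ) * bet k (lam i) b

/-- The generator matrix `G(D) = G_0 + G_1 D` of Construction 1. -/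
noncomputable def GpolyMat (q k n : ℕ) {F : Type*} [Field F] (γ : F) (lam : Fin n → F)
    (b : Fin (2 * k) → F) : Matrix (Fin k) (Fin n) (Polynomial F) :=
  Matrix.of fun r i =>
    Polynomial.C (G0mat q k n lam b r i) + Polynomial.C (G1mat q k n γ lam b r i) * Polynomial.X

section AuxLemmas

variable {F : Type*} [Field F]

lemma skewN_eq (q r : ℕ) (a : F) :
    skewN q r a = a ^ (∑ j ∈ Finset.range r, q ^ j) := by
  induction r with
  | zero => simp [skewN]
  | succ r ih =>
    rw [skewN, ih, geom_sum_succ, pow_add, pow_one, mul_comm q, pow_mul]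

lemma skewN_mul (q r : ℕ) (x y : F) :
    skewN q r (x * y) = skewN q r x * skewN q r y := by
  simp [skewN_eq, mul_pow]

lemma geom_aux (q : ℕ) (hq : 1 ≤ q) (r : ℕ) :
    (q - 1) * (∑ j ∈ Finset.range r, q ^ j) + 1 = q ^ r := by
  obtain ⟨m, rfl⟩ := Nat.exists_eq_add_of_le hq
  induction r with
  | zero => simp
  | succ r ih =>
    rw [geom_sum_succ, pow_succ, ← ih]
    simp only [Nat.add_sub_cancel_left]
    ring

lemma skewN_pow_mul (q : ℕ) (hq : 1 ≤ q) (r : ℕ) (a : F) :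
    skewN q r (a ^ (q - 1)) * a = a ^ q ^ r := by
  rw [skewN_eq, ← pow_mul, ← pow_succ, geom_aux q hq r]

lemma pow_pow_fixed (q r : ℕ) {a : F} (ha : a ^ q = a) : a ^ q ^ r = a := by
  induction r with
  | zero => simp
  | succ r ih => rw [pow_succ, pow_mul, ih, ha]

lemma vandermonde_indep (k : ℕ) (μ : Fin k → F)
    (hμ : Function.Injective μ) (c : Fin k → F)
    (h : ∀ j : Fin k, ∑ i, c i * μ i ^ (j : ℕ) = 0) : ∀ i, c i = 0 := by
  classical
  have hdet : ((Matrix.vandermonde μ)ᵀ).det ≠ 0 := by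
    rw [Matrix.det_transpose]
    intro h0
    rw [Matrix.det_vandermonde_eq_zero_iff] at h0
    obtain ⟨i, j, he, hne⟩ := h0
    exact hne (hμ he)
  by_contra hc
  push_neg at hc
  obtain ⟨i0, hi0⟩ := hc
  apply hdet
  rw [← Matrix.exists_mulVec_eq_zero_iff]
  refine ⟨c, fun hcc => hi0 (congrFun hcc i0), ?_⟩
  funext j
  simpa [Matrix.mulVec, dotProduct, Matrix.vandermonde, mul_comm] using h j

lemma sum_pow_q {q : ℕ} (hq : 0 < q) (hadd : ∀ x y : F, (x + y) ^ q = x ^ q + y ^ q)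
    {ι : Type*} (s : Finset ι) (f : ι → F) :
    (∑ i ∈ s, f i) ^ q = ∑ i ∈ s, (f i) ^ q := by
  let φ : F →+ F := { toFun := fun x => x ^ q, map_zero' := zero_pow hq.ne', map_add' := hadd }
  exact map_sum φ f s

lemma sum_pow_q_pow {q : ℕ} (hq : 0 < q) (hadd : ∀ x y : F, (x + y) ^ q = x ^ q + y ^ q)
    {ι : Type*} (s : Finset ι) (f : ι → F) (r : ℕ) :
    (∑ i ∈ s, f i) ^ q ^ r = ∑ i ∈ s, (f i) ^ q ^ r := by
  induction r with
  | zero => simp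
  | succ r ih => simp only [pow_succ, pow_mul, ih, sum_pow_q hq hadd]

lemma sub_pow_q {q : ℕ} (hq : 0 < q) (hadd : ∀ x y : F, (x + y) ^ q = x ^ q + y ^ q)
    (x y : F) : (x - y) ^ q = x ^ q - y ^ q := by
  let φ : F →+ F := { toFun := fun x => x ^ q, map_zero' := zero_pow hq.ne', map_add' := hadd }
  exact map_sub φ x y

lemma moore_det_ne_zero [Fintype F] [DecidableEq F] (q k : ℕ) (hq2 : 2 ≤ q) (hk : 0 < k)
    (hadd : ∀ x y : F, (x + y) ^ q = x ^ q + y ^ q)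
    (hcard : q ≤ Fintype.card {x : F // x ^ q = x})
    (v : Fin k → F)
    (hli : ∀ c : Fin k → F, (∀ i, c i ^ q = c i) → ∑ i, c i * v i = 0 → ∀ i, c i = 0) :
    (Matrix.of fun r i : Fin k => v i ^ q ^ (r : ℕ)).det ≠ 0 := by
  classical
  have hq0 : 0 < q := by omega
  intro hdet
  obtain ⟨c, hc0, hcM⟩ := Matrix.exists_vecMul_eq_zero_iff.mpr hdet
  have hcol : ∀ i : Fin k, ∑ r : Fin k, c r * v i ^ q ^ (r : ℕ) = 0 := by
    intro i
    have := congrFun hcM i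
    simpa [Matrix.vecMul, dotProduct] using this
  set K := {x : F // x ^ q = x}
  set P : F[X] := ∑ r : Fin k, C (c r) * X ^ (q ^ (r : ℕ)) with hP
  have hPne : P ≠ 0 := by
    have : ∃ r, c r ≠ 0 := by
      by_contra hall
      push_neg at hall
      exact hc0 (funext hall)
    obtain ⟨r, hr⟩ := this
    intro h0
    apply hr
    have : P.coeff (q ^ (r : ℕ)) = c r := by
      rw [hP, finset_sum_coeff]
      rw [Finset.sum_eq_single r]
      · simp [coeff_C_mul_X_pow]
      · intro r' _ hne
        rw [coeff_C_mul_X_pow]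
        have : q ^ (r : ℕ) ≠ q ^ (r' : ℕ) := by
          intro he
          exact hne (Fin.ext (Nat.pow_right_injective hq2 he)).symm
        simp [this]
      · simp
    rw [h0] at this
    simp at this
    exact this.symm
  have hdeg : P.natDegree ≤ q ^ (k - 1) := by
    apply Polynomial.natDegree_sum_le_of_forall_le
    intro r _
    refine (natDegree_C_mul_X_pow_le _ _).trans ?_
    exact Nat.pow_le_pow_right (by omega) (by omega)
  have hroot : ∀ a : Fin k → K, P.eval (∑ i, (a i : F) * v i) = 0 := by
    intro a
    rw [hP, eval_finset_sum]
    simp only [eval_mul, eval_C, eval_pow, eval_X]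
    have hfix : ∀ (i : Fin k) (r : ℕ), ((a i : F)) ^ q ^ r = (a i : F) := fun i r =>
      pow_pow_fixed q r (a i).2
    calc ∑ r : Fin k, c r * (∑ i, (a i : F) * v i) ^ q ^ (r : ℕ)
        = ∑ r : Fin k, c r * ∑ i, (a i : F) * (v i) ^ q ^ (r : ℕ) := by
          refine Finset.sum_congr rfl fun r _ => ?_
          rw [sum_pow_q_pow hq0 hadd]
          congr 1
          refine Finset.sum_congr rfl fun i _ => ?_
          rw [mul_pow, hfix]
      _ = ∑ i, (a i : F) * ∑ r : Fin k, c r * (v i) ^ q ^ (r : ℕ) := by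
          simp_rw [Finset.mul_sum]
          rw [Finset.sum_comm]
          exact Finset.sum_congr rfl fun i _ => Finset.sum_congr rfl fun r _ => by ring
      _ = 0 := by simp [hcol]
  have hinj : Function.Injective (fun a : Fin k → K => ∑ i, (a i : F) * v i) := by
    intro a a' he
    have hd : ∀ i, ((a i : F) - (a' i : F)) = 0 := by
      apply hli
      · intro i
        rw [sub_pow_q hq0 hadd, (a i).2, (a' i).2]
      · simp only [sub_mul, Finset.sum_sub_distrib]
        exact sub_eq_zero_of_eq he
    funext i
    exact Subtype.ext (sub_eq_zero.mp (hd i))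
  have hmaps : ∀ a : Fin k → K, (∑ i, (a i : F) * v i) ∈ P.roots.toFinset := by
    intro a
    rw [Multiset.mem_toFinset, mem_roots']
    exact ⟨hPne, hroot a⟩
  have hle : Fintype.card (Fin k → K) ≤ P.roots.toFinset.card := by
    rw [← Finset.card_univ]
    apply Finset.card_le_card_of_injOn (fun a : Fin k → K => ∑ i, (a i : F) * v i)
      (fun a _ => hmaps a)
    exact fun a _ a' _ h => hinj h
  have h1 : q ^ k ≤ Fintype.card (Fin k → K) := by
    rw [Fintype.card_fun, Fintype.card_fin]
    exact Nat.pow_le_pow_left hcard k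
  have h2 : P.roots.toFinset.card ≤ q ^ (k - 1) :=
    le_trans (Multiset.toFinset_card_le _) (le_trans (P.card_roots') hdeg)
  have h3 : q ^ (k - 1) < q ^ k := Nat.pow_lt_pow_right (by omega) (by omega)
  omega

end AuxLemmas

/-- In Construction 1, every `k × k` submatrix of `G_0` and of `G_1` is invertible. -/
theorem construction_submatrices_invertible (q k n : ℕ)
    (hq : IsPrimePow q) (hq3 : 3 ≤ q) (hqn : n ≤ q) (hk : 0 < k) (hkn : k < n)
    (F : Type*) [Field F] [Fintype F] (hF : Fintype.card F = q ^ (2 * k))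
    (γ : F) (hγ : orderOf γ = q ^ (2 * k) - 1)
    (lam : Fin n → F) (hlam : Function.Injective lam) (hlamq : ∀ i, (lam i) ^ q = lam i)
    (b : Fin (2 * k) → F)
    (hbi : ∀ c : Fin (2 * k) → F, (∀ j, (c j) ^ q = c j) → ∑ j, c j * b j = 0 → ∀ j, c j = 0)
    (hbs : ∀ x : F, ∃ c : Fin (2 * k) → F, (∀ j, (c j) ^ q = c j) ∧ x = ∑ j, c j * b j) :
    (∀ g : Fin k ↪ Fin n, ((G0mat q k n lam b).submatrix id ⇑g).det ≠ 0) ∧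
    (∀ g : Fin k ↪ Fin n, ((G1mat q k n γ lam b).submatrix id ⇑g).det ≠ 0) := by
  classical
  -- the Frobenius `x ↦ x ^ q` is additive
  obtain ⟨p, m, hp, hm, hqpm⟩ := hq
  have hpp : Nat.Prime p := Nat.prime_iff.mpr hp
  have hadd : ∀ x y : F, (x + y) ^ q = x ^ q + y ^ q := by
    haveI : CharP F (ringChar F) := ringChar.charP F
    obtain ⟨nn, hp', hcard'⟩ := FiniteField.card F (ringChar F)
    have heq : (ringChar F) ^ (nn : ℕ) = p ^ (m * (2 * k)) := by
      rw [← hcard', hF, ← hqpm, ← pow_mul]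
    have hdvd : ringChar F ∣ p ^ (m * (2 * k)) := heq ▸ dvd_pow_self (ringChar F) nn.pos.ne'
    have hrc : ringChar F = p :=
      (Nat.prime_dvd_prime_iff_eq hp' hpp).mp (hp'.dvd_of_dvd_pow hdvd)
    haveI := Fact.mk hpp
    haveI : CharP F p := hrc ▸ ringChar.charP F
    intro x y
    rw [← hqpm]
    exact add_pow_char_pow x y p m
  -- cardinality of the fixed subfield
  have hcardK : q ≤ Fintype.card {x : F // x ^ q = x} := by
    by_contra hlt
    push_neg at hlt
    choose coef hcq hxc using hbs
    have hinj : Function.Injective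
        (fun x : F => fun j : Fin (2 * k) => (⟨coef x j, hcq x j⟩ : {x : F // x ^ q = x})) := by
      intro x y he
      have hcc : ∀ j, coef x j = coef y j := fun j => congrArg Subtype.val (congrFun he j)
      rw [hxc x, hxc y]
      exact Finset.sum_congr rfl fun j _ => by rw [hcc j]
    have hle := Fintype.card_le_of_injective _ hinj
    rw [hF, Fintype.card_fun, Fintype.card_fin] at hle
    have := Nat.pow_lt_pow_left hlt (show 2 * k ≠ 0 by omega)
    omega
  have hγ0 : γ ≠ 0 := by
    intro h0
    have h1 := pow_orderOf_eq_one γ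
    have hgt : 1 < q ^ (2 * k) := Nat.one_lt_pow (by omega) (by omega)
    rw [hγ, h0, zero_pow (by omega : q ^ (2 * k) - 1 ≠ 0)] at h1
    exact zero_ne_one h1
  constructor
  · -- G0
    intro g
    have hM : (G0mat q k n lam b).submatrix id ⇑g =
        Matrix.of fun (r : Fin k) (i : Fin k) => (alph k (lam (g i)) b) ^ q ^ (r : ℕ) := by
      ext r i
      simp only [Matrix.submatrix_apply, G0mat, Matrix.of_apply, id]
      exact skewN_pow_mul q (by omega) r _
    rw [hM]
    apply moore_det_ne_zero q k (by omega) hk hadd hcardK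
    intro c hcq0 hsum
    set d : Fin (2 * k) → F :=
      fun j => if h : (j : ℕ) < k then ∑ i, c i * (lam (g i)) ^ (j : ℕ) else 0 with hd
    have hdq : ∀ j, d j ^ q = d j := by
      intro j
      by_cases h : (j : ℕ) < k
      · simp only [hd, dif_pos h]
        rw [sum_pow_q (by omega) hadd]
        refine Finset.sum_congr rfl fun i _ => ?_
        rw [mul_pow, hcq0, ← pow_mul, mul_comm (j : ℕ) q, pow_mul, hlamq]
      · simp only [hd]
        rw [dif_neg h, zero_pow (show q ≠ 0 by omega)]
    have hzero : ∑ j, d j * b j = 0 := by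
      have h1 : ∑ j ∈ Finset.univ.map (Fin.castLEEmb (show k ≤ 2 * k by omega)), d j * b j
          = ∑ j : Fin (2 * k), d j * b j := by
        apply Finset.sum_subset (Finset.subset_univ _)
        intro j _ hj
        have hnk : ¬ (j : ℕ) < k := by
          intro hlt
          exact hj (Finset.mem_map.mpr ⟨⟨(j : ℕ), hlt⟩, Finset.mem_univ _, by
            simp [Fin.castLEEmb]⟩)
        simp only [hd]
        rw [dif_neg hnk, zero_mul]
      rw [← h1, Finset.sum_map]
      calc ∑ j : Fin k, d (Fin.castLEEmb (show k ≤ 2 * k by omega) j)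
              * b (Fin.castLEEmb (show k ≤ 2 * k by omega) j)
          = ∑ j : Fin k, ∑ i, c i *
              ((lam (g i)) ^ (j : ℕ) * b (Fin.castLE (show k ≤ 2 * k by omega) j)) := by
            refine Finset.sum_congr rfl fun j _ => ?_
            have hlt : ((Fin.castLEEmb (show k ≤ 2 * k by omega) j : Fin (2*k)) : ℕ) < k :=
              j.isLt
            rw [hd]
            simp only [dif_pos hlt]
            rw [Finset.sum_mul]
            refine Finset.sum_congr rfl fun i _ => ?_
            simp [Fin.castLEEmb]
            ring
        _ = ∑ i, ∑ j : Fin k, c i *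
              ((lam (g i)) ^ (j : ℕ) * b (Fin.castLE (show k ≤ 2 * k by omega) j)) :=
            Finset.sum_comm
        _ = 0 := by simpa [alph, Finset.mul_sum] using hsum
    have hvdm : ∀ j : Fin k, ∑ i, c i * (lam (g i)) ^ (j : ℕ) = 0 := by
      intro j
      have hz := hbi d hdq hzero (Fin.castLE (show k ≤ 2 * k by omega) j)
      have hlt : ((Fin.castLE (show k ≤ 2 * k by omega) j : Fin (2*k)) : ℕ) < k := j.isLt
      rw [hd] at hz
      simpa [dif_pos hlt] using hz
    exact vandermonde_indep k (fun i => lam (g i)) (hlam.comp g.injective) c hvdm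
  · -- G1
    intro g
    have hM : (G1mat q k n γ lam b).submatrix id ⇑g =
        Matrix.of fun (r : Fin k) (i : Fin k) =>
          skewN q (r : ℕ) γ * (bet k (lam (g i)) b) ^ q ^ (r : ℕ) := by
      ext r i
      simp only [Matrix.submatrix_apply, G1mat, Matrix.of_apply, id]
      rw [skewN_mul, mul_comm (skewN q (r : ℕ) ((bet k (lam (g i)) b) ^ (q - 1)))
        (skewN q (r : ℕ) γ), mul_assoc, skewN_pow_mul q (by omega)]
    rw [hM]
    have hdetmul : (Matrix.of fun (r : Fin k) (i : Fin k) =>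
          skewN q (r : ℕ) γ * (bet k (lam (g i)) b) ^ q ^ (r : ℕ)).det
        = (∏ r : Fin k, skewN q (r : ℕ) γ) *
          (Matrix.of fun (r : Fin k) (i : Fin k) => (bet k (lam (g i)) b) ^ q ^ (r : ℕ)).det :=
      Matrix.det_mul_column _ _
    rw [hdetmul]
    apply mul_ne_zero
    · apply Finset.prod_ne_zero_iff.mpr
      intro r _
      rw [skewN_eq]
      exact pow_ne_zero _ hγ0
    · apply moore_det_ne_zero q k (by omega) hk hadd hcardK
      intro c hcq0 hsum
      set d : Fin (2 * k) → F := fun j => ∑ i, c i * (lam (g i)) ^ (j : ℕ) with hd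
      have hdq : ∀ j, d j ^ q = d j := by
        intro j
        rw [hd]
        rw [sum_pow_q (by omega) hadd]
        refine Finset.sum_congr rfl fun i _ => ?_
        rw [mul_pow, hcq0, ← pow_mul, mul_comm (j : ℕ) q, pow_mul, hlamq]
      have hzero : ∑ j, d j * b j = 0 := by
        calc ∑ j, d j * b j
            = ∑ j : Fin (2 * k), ∑ i, c i * ((lam (g i)) ^ (j : ℕ) * b j) := by
              refine Finset.sum_congr rfl fun j _ => ?_
              rw [hd, Finset.sum_mul]
              exact Finset.sum_congr rfl fun i _ => by ring
          _ = ∑ i, ∑ j : Fin (2 * k), c i * ((lam (g i)) ^ (j : ℕ) * b j) := Finset.sum_comm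
          _ = 0 := by simpa [bet, Finset.mul_sum] using hsum
      have hvdm : ∀ j : Fin k, ∑ i, c i * (lam (g i)) ^ (j : ℕ) = 0 := by
        intro j
        have hz := hbi d hdq hzero (Fin.castLE (show k ≤ 2 * k by omega) j)
        rw [hd] at hz
        simpa using hz
      exact vandermonde_indep k (fun i => lam (g i)) (hlam.comp g.injective) c hvdm
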